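/- arXiv:1605.08434 — 4 statements merged into one kernel-verified Lean document; each statement's English description precedes it below -/
import Mathlib

section
/- Let ν_k : C → P denote the function with ν_k(ι) = (k, 0, 0, …) and ν_k(ρ) = 0 for ρ ≠ ι. Fix m ≥ 0 and a function λ : C → P with ‖λ‖ finite, writing λ(ι) = (λ_1, λ_2,…). If for some n ≥ m there exists a zigzag path from ν_{n−m} to λ[n], then n − ‖λ‖ ≥ n − 2m and λ_1 ≤ m; in particular 3m − ‖λ‖ ≥ λ_1, so λ[3m] is well-defined. -/
/-- A partition: a non-increasing sequence of naturals with only finitely many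
nonzero terms.  (`f i` is the `(i+1)`-st part.) -/
def IsPartition (f : ℕ → ℕ) : Prop := Antitone f ∧ ∃ N, ∀ i, N ≤ i → f i = 0

/-- `|λ|`: the sum of the parts of a partition. -/
noncomputable def psize (f : ℕ → ℕ) : ℕ := ∑ᶠ i, f i

/-- `λ ⟶⁺ μ`: `μ` is obtained from `λ` by adding at most one box to each row. -/
def StepUp (a b : ℕ → ℕ) : Prop := ∀ i, a i ≤ b i ∧ b i ≤ a i + 1

/-- `μ ⟶⁻ λ`: `λ` is obtained from `μ` by removing at most one box from each row. -/
def StepDown (b a : ℕ → ℕ) : Prop := ∀ i, b i - 1 ≤ a i ∧ a i ≤ b i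

/-- `h̄`: add one box to the first row. -/
def hbar (f : ℕ → ℕ) : ℕ → ℕ := fun i => if i = 0 then f 0 + 1 else f i

variable {C : Type*}

/-- Pointwise `⟶⁺` for functions `C → P`. -/
def FStepUp (a b : C → ℕ → ℕ) : Prop := ∀ ρ, StepUp (a ρ) (b ρ)

/-- Pointwise `⟶⁻` for functions `C → P`. -/
def FStepDown (b a : C → ℕ → ℕ) : Prop := ∀ ρ, StepDown (b ρ) (a ρ)

/-- `‖μ‖ = ∑_ρ d(ρ)·|μ(ρ)|` for a weight function `d : C → ℕ`. -/
noncomputable def normC (d : C → ℕ) (mu : C → ℕ → ℕ) : ℕ := ∑ᶠ ρ, d ρ * psize (mu ρ)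

/-- Prepend a part `a` to a sequence. -/
def prependPart (a : ℕ) (f : ℕ → ℕ) : ℕ → ℕ := fun i => if i = 0 then a else f (i - 1)

/-- `λ[n]`: agrees with `λ` away from `ι`, and `λ[n](ι) = (n - ‖λ‖, λ₁, λ₂, …)`. -/
noncomputable def shiftFun [DecidableEq C] (d : C → ℕ) (iota : C) (l : C → ℕ → ℕ)
    (n : ℕ) : C → ℕ → ℕ :=
  fun ρ => if ρ = iota then prependPart (n - normC d l) (l iota) else l ρ

/-- `ν_k : C → P`, equal to the one-row partition `(k, 0, 0, …)` at `ι` and `0`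
elsewhere. -/
def nuK [DecidableEq C] (iota : C) (k : ℕ) : C → ℕ → ℕ :=
  fun ρ => if ρ = iota then (fun i => if i = 0 then k else 0) else 0

/-- `α̃`: apply `h̄` to the value at `ι`, keep other values. -/
def tildeF [DecidableEq C] (iota : C) (a : C → ℕ → ℕ) : C → ℕ → ℕ :=
  fun ρ => if ρ = iota then hbar (a iota) else a ρ

/-- A zigzag path `ν ⟶⁻ λ⁽¹⁾ ⟶⁺ μ⁽¹⁾ ⟶⁻ λ⁽²⁾ ⟶⁺ ⋯ ⟶⁺ μ⁽ᵐ⁾ = μ` of partition-valued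
functions with finite support, with `‖μ⁽ˢ⁾‖ = ‖ν‖ + s`.  Here `l ⟨r⟩` is `λ⁽ʳ⁺¹⁾`
and `mus ⟨s⟩` is `μ⁽ˢ⁺¹⁾`. -/
def IsZigzag (d : C → ℕ) (m : ℕ) (nu mu : C → ℕ → ℕ)
    (l mus : Fin m → C → ℕ → ℕ) : Prop :=
  (∀ r : Fin m, ∀ ρ, IsPartition (l r ρ)) ∧
  (∀ s : Fin m, ∀ ρ, IsPartition (mus s ρ)) ∧
  (∀ r : Fin m, (Function.support (l r)).Finite) ∧
  (∀ s : Fin m, (Function.support (mus s)).Finite) ∧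
  (∀ s : Fin m, normC d (mus s) = normC d nu + s.val + 1) ∧
  (∀ hm : 0 < m, FStepDown nu (l ⟨0, hm⟩)) ∧
  (∀ r : Fin m, FStepUp (l r) (mus r)) ∧
  (∀ (r : ℕ) (h1 : r + 1 < m),
      FStepDown (mus ⟨r, Nat.lt_of_succ_lt h1⟩) (l ⟨r + 1, h1⟩)) ∧
  (∀ hm : 0 < m, mus ⟨m - 1, Nat.sub_lt hm Nat.one_pos⟩ = mu) ∧
  (m = 0 → nu = mu)

/-- `Z(ν, μ)`: the set of zigzag paths from `ν` to `μ`. -/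
def Zigzags (d : C → ℕ) (m : ℕ) (nu mu : C → ℕ → ℕ) :
    Set ((Fin m → C → ℕ → ℕ) × (Fin m → C → ℕ → ℕ)) :=
  {p | IsZigzag d m nu mu p.1 p.2}

lemma psize_eq_sum (f : ℕ → ℕ) (N : ℕ) (h : ∀ i, N ≤ i → f i = 0) :
    psize f = ∑ i ∈ Finset.range N, f i := by
  apply finsum_eq_finset_sum_of_support_subset
  intro x hx
  simp only [Function.mem_support] at hx
  simp only [Finset.coe_range, Set.mem_Iio]
  by_contra h'
  exact hx (h x (le_of_not_gt h'))

lemma psize_zero : psize (fun _ => (0:ℕ)) = 0 := by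
  unfold psize; exact finsum_zero

lemma psize_prepend (a : ℕ) (f : ℕ → ℕ) (N : ℕ) (h : ∀ i, N ≤ i → f i = 0) :
    psize (prependPart a f) = a + psize f := by
  rw [psize_eq_sum f N h,
      psize_eq_sum (prependPart a f) (N+1) (by
        intro i hi
        unfold prependPart
        have hi0 : i ≠ 0 := by omega
        simp [hi0, h (i-1) (by omega)]),
      Finset.sum_range_succ']
  unfold prependPart
  simp [Nat.add_comm]

lemma psize_onerow (k : ℕ) : psize (fun i => if i = 0 then k else 0) = k := by
  have h := psize_prepend k (fun _ => 0) 0 (fun _ _ => rfl)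
  have he : prependPart k (fun _ => 0) = fun i => if i = 0 then (k:ℕ) else 0 := by
    funext i; simp [prependPart]
  rw [he] at h
  rw [h, psize_zero]
  omega

lemma zig_bound {C : Type*} (d : C → ℕ) (m : ℕ) (nu mu : C → ℕ → ℕ)
    (lam mus : Fin m → C → ℕ → ℕ) (hz : IsZigzag d m nu mu lam mus) :
    ∀ r, ∀ h : r < m, ∀ ρ i,
      mus ⟨r, h⟩ ρ i ≤ nu ρ i + (r+1) ∧ nu ρ i ≤ mus ⟨r, h⟩ ρ i + (r+1) := by
  obtain ⟨_, _, _, _, _, hdown0, hup, hdown, _, _⟩ := hz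
  intro r
  induction r with
  | zero =>
    intro h ρ i
    have h1 := hdown0 h ρ i
    have h2 := hup ⟨0, h⟩ ρ i
    omega
  | succ r ih =>
    intro h ρ i
    have h1 := hdown r h ρ i
    have h2 := hup ⟨r+1, h⟩ ρ i
    have h3 := ih (Nat.lt_of_succ_lt h) ρ i
    omega

/-- If for some `n ≥ m` there is a zigzag path from `ν_{n-m}` to `λ[n]`, then
`‖λ‖ ≤ 2m` (i.e. `n - ‖λ‖ ≥ n - 2m`) and `λ₁ ≤ m`; in particular
`‖λ‖ + λ₁ ≤ 3m` (i.e. `3m - ‖λ‖ ≥ λ₁`), so `λ[3m]` is well defined. -/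
theorem stmt_6 [DecidableEq C] (d : C → ℕ) (hd : ∀ ρ, 0 < d ρ) (iota : C)
    (hiota : d iota = 1) (m n : ℕ) (hmn : m ≤ n) (l : C → ℕ → ℕ)
    (hp : ∀ ρ, IsPartition (l ρ)) (hfin : (Function.support l).Finite)
    (lam mus : Fin m → C → ℕ → ℕ)
    (hz : IsZigzag d m (nuK iota (n - m)) (shiftFun d iota l n) lam mus) :
    normC d l ≤ 2 * m ∧ l iota 0 ≤ m ∧ normC d l + l iota 0 ≤ 3 * m := by
  classical
  obtain ⟨Nof, hNof⟩ : ∃ Nof : C → ℕ, ∀ ρ i, Nof ρ ≤ i → l ρ i = 0 := by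
    choose Nof hNof using fun ρ => (hp ρ).2
    exact ⟨Nof, hNof⟩
  set a := normC d l with ha
  have hshift_i0 : shiftFun d iota l n iota 0 = n - a := by
    simp [shiftFun, prependPart, ha]
  have hshift_i1 : shiftFun d iota l n iota 1 = l iota 0 := by
    simp [shiftFun, prependPart]
  have hnuK1 : ∀ k, nuK iota k iota 1 = 0 := by intro k; simp [nuK]
  have hnuK0 : ∀ k, nuK iota k iota 0 = k := by intro k; simp [nuK]
  have hnormnu : ∀ k, normC d (nuK iota k) = k := by
    intro k
    have hsum : normC d (nuK iota k) = ∑ ρ ∈ {iota}, d ρ * psize (nuK iota k ρ) := by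
      apply finsum_eq_finset_sum_of_support_subset
      intro ρ hρ
      simp only [Function.mem_support] at hρ
      simp only [Finset.coe_singleton, Set.mem_singleton_iff]
      by_contra hne
      apply hρ
      have : nuK iota k ρ = fun _ => 0 := by funext i; simp [nuK, hne]
      rw [this, psize_zero, mul_zero]
    rw [hsum, Finset.sum_singleton]
    have : nuK iota k iota = fun i => if i = 0 then k else 0 := by
      funext i; simp [nuK]
    rw [this, psize_onerow, hiota, one_mul]
  set s : Finset C := hfin.toFinset ∪ {iota} with hs
  have hιs : iota ∈ s := by simp [hs]
  have hl_zero : ∀ ρ, ρ ∉ s → l ρ = fun _ => 0 := by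
    intro ρ hρ
    have : ρ ∉ hfin.toFinset := fun h => hρ (Finset.mem_union_left _ h)
    simp only [Set.Finite.mem_toFinset, Function.mem_support, not_not] at this
    rw [this]; rfl
  have hl_sum : normC d l = ∑ ρ ∈ s, d ρ * psize (l ρ) := by
    apply finsum_eq_finset_sum_of_support_subset
    intro ρ hρ
    simp only [Function.mem_support] at hρ
    by_contra hne
    apply hρ
    rw [hl_zero ρ hne, psize_zero, mul_zero]
  have hshift_sum : normC d (shiftFun d iota l n) =
      ∑ ρ ∈ s, d ρ * psize (shiftFun d iota l n ρ) := by
    apply finsum_eq_finset_sum_of_support_subset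
    intro ρ hρ
    simp only [Function.mem_support] at hρ
    by_contra hne
    apply hρ
    have hρι : ρ ≠ iota := fun h => hne (h ▸ hιs)
    have : shiftFun d iota l n ρ = l ρ := by simp [shiftFun, hρι]
    rw [this, hl_zero ρ hne, psize_zero, mul_zero]
  have key : normC d (shiftFun d iota l n) = (n - a) + a := by
    rw [hshift_sum]
    have hterm : ∀ ρ ∈ s, d ρ * psize (shiftFun d iota l n ρ) =
        (if ρ = iota then n - a else 0) + d ρ * psize (l ρ) := by
      intro ρ _
      by_cases hρ : ρ = iota
      · rw [hρ]
        have hv : shiftFun d iota l n iota = prependPart (n - a) (l iota) := by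
          simp [shiftFun, ha]
        rw [hv, psize_prepend (n - a) (l iota) (Nof iota) (hNof iota), hiota]
        simp
      · simp [shiftFun, hρ]
    rw [Finset.sum_congr rfl hterm, Finset.sum_add_distrib]
    simp [hιs, ← hl_sum, ha]
  by_cases hm : m = 0
  · subst hm
    have h0 := hz.2.2.2.2.2.2.2.2.2 rfl
    have hleq : ∀ ρ i, l ρ i = 0 := by
      intro ρ i
      by_cases hρ : ρ = iota
      · subst hρ
        have := congrFun (congrFun h0 ρ) (i+1)
        simpa [nuK, shiftFun, prependPart] using this.symm
      · have := congrFun (congrFun h0 ρ) i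
        simpa [nuK, hρ, shiftFun] using this.symm
    have ha0 : a = 0 := by
      rw [ha, hl_sum]
      apply Finset.sum_eq_zero
      intro ρ _
      have : l ρ = fun _ => 0 := funext fun i => hleq ρ i
      rw [this, psize_zero, mul_zero]
    have hlι : l iota 0 = 0 := hleq iota 0
    omega
  · have hmpos : 0 < m := Nat.pos_of_ne_zero hm
    have hlast := hz.2.2.2.2.2.2.2.2.1 hmpos
    have hb := zig_bound d m _ _ lam mus hz (m-1) (Nat.sub_lt hmpos Nat.one_pos)
    have hnorm := hz.2.2.2.2.1 ⟨m-1, Nat.sub_lt hmpos Nat.one_pos⟩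
    rw [hlast, key, hnormnu] at hnorm
    have hb0 := hb iota 0
    have hb1 := hb iota 1
    rw [hlast] at hb0 hb1
    rw [hshift_i0, hnuK0] at hb0
    rw [hshift_i1, hnuK1] at hb1
    omega
end

section
/- In any zigzag path from ν to μ where ν(ι) = (k, 0, 0, …) (and ν vanishes elsewhere), writing λ^(r)(ι) = (α^(r)_1, α^(r)_2, …) and μ^(s)(ι) = (β^(s)_1, β^(s)_2, …), one has α^(r)_1 ≥ k − r, α^(r)_2 ≤ r − 1, β^(s)_1 ≥ k − s, and β^(s)_2 ≤ s, for all 1 ≤ r, s ≤ m. -/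
variable {C : Type*}

/-- Bounds along a zigzag path starting from `ν` with `ν(ι) = (k, 0, 0, …)` and
`ν(ρ) = 0` for `ρ ≠ ι`: writing `λ⁽ʳ⁾(ι) = (α⁽ʳ⁾₁, α⁽ʳ⁾₂, …)` and
`μ⁽ˢ⁾(ι) = (β⁽ˢ⁾₁, β⁽ˢ⁾₂, …)`, one has `α⁽ʳ⁾₁ ≥ k - r`, `α⁽ʳ⁾₂ ≤ r - 1`,
`β⁽ˢ⁾₁ ≥ k - s` and `β⁽ˢ⁾₂ ≤ s` for `1 ≤ r, s ≤ m`.  (Here `l ⟨r-1⟩ = λ⁽ʳ⁾`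
and `mus ⟨s-1⟩ = μ⁽ˢ⁾`.) -/
theorem stmt_8 [DecidableEq C] (d : C → ℕ) (hd : ∀ ρ, 0 < d ρ) (iota : C)
    (hiota : d iota = 1) (m k : ℕ) (mu : C → ℕ → ℕ)
    (l mus : Fin m → C → ℕ → ℕ) (hz : IsZigzag d m (nuK iota k) mu l mus) :
    ∀ r : Fin m,
      k ≤ l r iota 0 + (r.val + 1) ∧ l r iota 1 ≤ r.val ∧
      k ≤ mus r iota 0 + (r.val + 1) ∧ mus r iota 1 ≤ r.val + 1 := by
  obtain ⟨-, -, -, -, -, hdown0, hup, hdown, -, -⟩ := hz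
  suffices H : ∀ rv (h : rv < m),
      k ≤ l ⟨rv, h⟩ iota 0 + (rv + 1) ∧ l ⟨rv, h⟩ iota 1 ≤ rv ∧
      k ≤ mus ⟨rv, h⟩ iota 0 + (rv + 1) ∧ mus ⟨rv, h⟩ iota 1 ≤ rv + 1 by
    intro r; simpa using H r.val r.isLt
  intro rv
  induction rv with
  | zero =>
    intro h
    have hd0 := hdown0 h iota
    have h0 := hd0 0
    have h1 := hd0 1
    simp [nuK] at h0 h1
    have hu := hup ⟨0, h⟩ iota
    have hu0 := hu 0
    have hu1 := hu 1
    refine ⟨by omega, by omega, by omega, by omega⟩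
  | succ n ih =>
    intro h
    obtain ⟨-, -, hm0, hm1⟩ := ih (Nat.lt_of_succ_lt h)
    have hdn := hdown n h iota
    have h0 := hdn 0
    have h1 := hdn 1
    have hu := hup ⟨n + 1, h⟩ iota
    have hu0 := hu 0
    have hu1 := hu 1
    simp only [StepDown, StepUp] at *
    refine ⟨by omega, by omega, by omega, by omega⟩
end

section
/- Fix m, ℓ ≥ 0 and set s = m + min(m, ℓ). For every r ≥ s, with n = ℓ + r, the map of double coset spaces L_{ℓ,r+1}\GL_{n+1}(F_q)/L_{m,n+1−m} induced by the standard inclusion GL_n(F_q) ↪ GL_{n+1}(F_q) is surjective: every x ∈ GL_{n+1}(F_q) can be written as g·y·g' with g ∈ L_{ℓ,r+1}, g' ∈ L_{m,n+1−m}, and y in the image of GL_n(F_q) (i.e., y has last row and column equal to those of the identity). -/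
open Matrix

/-- `Hom_VIC(F^m, F^n)`: pairs `(f, K)` with `f : F^m → F^n` injective linear
and `K ≤ F^n` a complement of the image of `f`. -/
def VICHom (F : Type*) [Field F] [Fintype F] (m n : ℕ) :=
  {p : ((Fin m → F) →ₗ[F] (Fin n → F)) × Submodule F (Fin n → F) //
    Function.Injective p.1 ∧ IsCompl (LinearMap.range p.1) p.2}

/-- The standard inclusion `F^m ↪ F^n`, `(x₁, …, x_m) ↦ (x₁, …, x_m, 0, …, 0)`. -/
def stdInc (F : Type*) [Field F] (m n : ℕ) : (Fin m → F) →ₗ[F] (Fin n → F) where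
  toFun x := fun i => if h : (i : ℕ) < m then x ⟨i, h⟩ else 0
  map_add' x y := by funext i; by_cases h : (i : ℕ) < m <;> simp [h]
  map_smul' c x := by funext i; by_cases h : (i : ℕ) < m <;> simp [h]

/-- The subspace of `F^n` of vectors whose first `m` coordinates are `0`. -/
def stdCompl (F : Type*) [Field F] (m n : ℕ) : Submodule F (Fin n → F) where
  carrier := {v | ∀ i : Fin n, (i : ℕ) < m → v i = 0}
  add_mem' hx hy i hi := by simp [hx i hi, hy i hi]
  zero_mem' i _ := rfl
  smul_mem' c x hx i hi := by simp [hx i hi]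

/-- Membership in `L_{m, n-m} ≤ GL_n(F_q)`: the block-diagonal matrices
`diag(1_m, g₂₂)`, i.e. the matrices whose entries in any position `(i, j)`
with `i < m` or `j < m` agree with the identity matrix. -/
def IsL (m : ℕ) {n : ℕ} {F : Type*} [Field F] (g : Matrix (Fin n) (Fin n) F) : Prop :=
  ∀ i j : Fin n, ((i : ℕ) < m ∨ (j : ℕ) < m) → g i j = if i = j then 1 else 0


section helpers
open Module
variable {F : Type*} [Field F] {k N : ℕ}


lemma IsL.mul {M P : Matrix (Fin N) (Fin N) F} (hM : IsL k M) (hP : IsL k P) :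
    IsL k (M * P) := by
  intro i j hij
  rcases hij with h | h
  · rw [Matrix.mul_apply]
    have : ∀ t, M i t * P t j = (if i = t then 1 else 0) * P t j := fun t => by
      rw [hM i t (Or.inl h)]
    rw [Finset.sum_congr rfl (fun t _ => this t)]
    simp only [ite_mul, one_mul, zero_mul]
    rw [Finset.sum_ite_eq]
    simp [hP i j (Or.inl h)]
  · rw [Matrix.mul_apply]
    have : ∀ t, M i t * P t j = M i t * (if t = j then 1 else 0) := fun t => by
      rw [hP t j (Or.inr h)]
    rw [Finset.sum_congr rfl (fun t _ => this t)]
    simp only [mul_ite, mul_one, mul_zero]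
    rw [Finset.sum_ite_eq']
    simp [hM i j (Or.inr h)]

lemma IsL.inv {M P : Matrix (Fin N) (Fin N) F} (hM : IsL k M)
    (h1 : M * P = 1) (h2 : P * M = 1) : IsL k P := by
  intro i j hij
  rcases hij with h | h
  · have := congrArg (fun Q => Q i j) h1
    simp only [Matrix.mul_apply] at this
    have e : ∀ t, M i t * P t j = (if i = t then 1 else 0) * P t j := fun t => by
      rw [hM i t (Or.inl h)]
    rw [Finset.sum_congr rfl (fun t _ => e t)] at this
    simp only [ite_mul, one_mul, zero_mul] at this
    rw [Finset.sum_ite_eq] at this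
    simpa [Matrix.one_apply] using this
  · have := congrArg (fun Q => Q i j) h2
    simp only [Matrix.mul_apply] at this
    have e : ∀ t, P i t * M t j = P i t * (if t = j then 1 else 0) := fun t => by
      rw [hM t j (Or.inr h)]
    rw [Finset.sum_congr rfl (fun t _ => e t)] at this
    simp only [mul_ite, mul_one, mul_zero] at this
    rw [Finset.sum_ite_eq'] at this
    simpa [Matrix.one_apply] using this

lemma IsL.transpose {M : Matrix (Fin N) (Fin N) F} (hM : IsL k M) : IsL k Mᵀ := by
  intro i j hij
  rw [Matrix.transpose_apply, hM j i (Or.symm hij)]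
  simp [eq_comm]

variable {N' : ℕ}
variable {k n : ℕ}


-- R: invertible, IsL k, last column = a   (given a ≠ 0 supported in [k, n])
lemma existsR (hk : k ≤ n) (a : Fin (n+1) → F)
    (ha : ∀ j : Fin (n+1), (j : ℕ) < k → a j = 0) (ha0 : a ≠ 0) :
    ∃ R Ri : Matrix (Fin (n+1)) (Fin (n+1)) F,
      R * Ri = 1 ∧ Ri * R = 1 ∧
      (∀ i, R i (Fin.last n) = a i) ∧
      (∀ i j : Fin (n+1), ((i:ℕ) < k ∨ (j:ℕ) < k) → R i j = if i = j then 1 else 0) := by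
  obtain ⟨p, hp⟩ : ∃ p, a p ≠ 0 := by
    by_contra hc; push_neg at hc; exact ha0 (funext hc)
  set R : Matrix (Fin (n+1)) (Fin (n+1)) F :=
    Matrix.of fun i j => if j = Fin.last n then a i
      else if j = p then (if i = Fin.last n then 1 else 0)
      else (if i = j then 1 else 0) with hR
  have hcol : ∀ i, R i (Fin.last n) = a i := fun i => by simp [hR]
  -- injectivity of mulVec
  have hinj : ∀ v : Fin (n+1) → F, R *ᵥ v = 0 → v = 0 := by
    intro v hv
    have hvlast : v (Fin.last n) = 0 := by
      have hp0 := congrFun hv p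
      have : (R *ᵥ v) p = a p * v (Fin.last n) := by
        rw [Matrix.mulVec, dotProduct]
        rw [Finset.sum_eq_single (Fin.last n)]
        · simp [hR]
        · intro b _ hb
          have : R p b = 0 := by
            simp only [hR, Matrix.of_apply, if_neg hb]
            by_cases hbp : b = p
            · rw [if_pos hbp, if_neg (by rw [← hbp]; exact hb)]
            · simp [hbp, Ne.symm hbp]
          rw [this, zero_mul]
        · simp
      rw [this] at hp0
      simp only [Pi.zero_apply] at hp0
      exact (mul_eq_zero.mp hp0).resolve_left hp
    have hvp : v p = 0 := by
      by_cases hpl : p = Fin.last n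
      · rw [hpl]; exact hvlast
      · have hl0 := congrFun hv (Fin.last n)
        have : (R *ᵥ v) (Fin.last n) = a (Fin.last n) * v (Fin.last n) + v p := by
          rw [Matrix.mulVec, dotProduct]
          rw [Finset.sum_eq_add_of_mem (Fin.last n) p (Finset.mem_univ _) (Finset.mem_univ _)
            (fun h => hpl (h.symm)) ?_]
          · congr 1
            · simp [hR]
            · simp [hR, Ne.symm hpl, hpl]
          · intro b _ hb
            have : R (Fin.last n) b = 0 := by
              simp [hR, hb.1, hb.2, Ne.symm hb.1]
            rw [this, zero_mul]
        rw [this, hvlast, mul_zero, zero_add] at hl0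
        exact hl0
    funext i
    by_cases hil : i = Fin.last n
    · rw [hil]; exact hvlast
    by_cases hip : i = p
    · rw [hip]; exact hvp
    have hi0 := congrFun hv i
    have : (R *ᵥ v) i = a i * v (Fin.last n) + v i := by
      rw [Matrix.mulVec, dotProduct]
      rw [Finset.sum_eq_add_of_mem (Fin.last n) i (Finset.mem_univ _) (Finset.mem_univ _)
        (fun h => hil h.symm) ?_]
      · congr 1
        · simp [hR]
        · simp [hR, hil, hip]
      · intro b _ hb
        have : R i b = 0 := by
          simp only [hR, Matrix.of_apply, if_neg hb.1]
          by_cases hbp : b = p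
          · simp [hbp, hil]
          · simp [hbp, Ne.symm hb.2]
        rw [this, zero_mul]
    rw [this, hvlast, mul_zero, zero_add] at hi0
    exact hi0
  have hdet : R.det ≠ 0 := by
    intro h
    obtain ⟨v, hv0, hv⟩ := Matrix.exists_mulVec_eq_zero_iff.mpr h
    exact hv0 (hinj v hv)
  have hunit : IsUnit R.det := isUnit_iff_ne_zero.mpr hdet
  refine ⟨R, R⁻¹, Matrix.mul_nonsing_inv R hunit, Matrix.nonsing_inv_mul R hunit, hcol, ?_⟩
  -- IsL property of R
  have hkp : k ≤ (p : ℕ) := by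
    by_contra hc; push_neg at hc; exact hp (ha p hc)
  intro i j hij
  have hlast : k ≤ (Fin.last n : ℕ) := by simpa using hk
  rcases hij with h | h
  · have hine : i ≠ Fin.last n := by
      intro he; rw [he] at h; omega
    have hinp : i ≠ p := by
      intro he; rw [he] at h; omega
    simp only [hR, Matrix.of_apply]
    by_cases hjl : j = Fin.last n
    · rw [if_pos hjl, ha i h]
      subst hjl; simp [hine]
    rw [if_neg hjl]
    by_cases hjp : j = p
    · rw [if_pos hjp, if_neg hine]
      subst hjp
      simp [hinp]
    · rw [if_neg hjp]
  · have hjne : j ≠ Fin.last n := by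
      intro he; rw [he] at h; omega
    have hjnp : j ≠ p := by
      intro he; rw [he] at h; omega
    simp [hR, hjne, hjnp]

lemma existsG (hk : k ≤ n) (a b : Fin (n+1) → F)
    (ha : ∀ j : Fin (n+1), (j : ℕ) < k → a j = 0)
    (hb : ∀ j : Fin (n+1), (j : ℕ) < k → b j = 0)
    (hab : a ⬝ᵥ b = 1) :
    ∃ G Gi : Matrix (Fin (n+1)) (Fin (n+1)) F,
      G * Gi = 1 ∧ Gi * G = 1 ∧
      (∀ i j : Fin (n+1), ((i:ℕ) < k ∨ (j:ℕ) < k) → G i j = if i = j then 1 else 0) ∧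
      G *ᵥ Pi.single (Fin.last n) 1 = b ∧
      a ᵥ* G = Pi.single (Fin.last n) 1 := by
  have ha0 : a ≠ 0 := by
    intro h; rw [h] at hab; simp at hab
  obtain ⟨R, Ri, hRRi, hRiR, hRcol, hRL⟩ := existsR hk a ha ha0
  have hRiL : ∀ i j : Fin (n+1), ((i:ℕ) < k ∨ (j:ℕ) < k) → Ri i j = if i = j then 1 else 0 :=
    IsL.inv hRL hRRi hRiR
  -- v = last row of Ri
  set v : Fin (n+1) → F := fun i => Ri (Fin.last n) i with hv
  set e : Fin (n+1) → F := Pi.single (Fin.last n) 1 with he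
  have hRa : R *ᵥ e = a := by
    rw [he, Matrix.mulVec_single_one]
    funext i; exact hRcol i
  have hRia : Ri *ᵥ a = e := by
    rw [← hRa, Matrix.mulVec_mulVec, hRiR, Matrix.one_mulVec]
  have hav : a ⬝ᵥ v = 1 := by
    have : a ⬝ᵥ v = (Ri *ᵥ a) (Fin.last n) := by
      rw [Matrix.mulVec, dotProduct, dotProduct]
      exact Finset.sum_congr rfl fun i _ => mul_comm _ _
    rw [this, hRia, he]
    simp
  set w : Fin (n+1) → F := b - v with hw
  have haw : a ⬝ᵥ w = 0 := by
    rw [hw, dotProduct_sub, hab, hav, sub_self]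
  set A : Matrix (Fin (n+1)) (Fin (n+1)) F := Matrix.vecMulVec w a with hA
  have hAA : A * A = 0 := by
    funext i j
    rw [Matrix.mul_apply]
    simp only [hA, Matrix.vecMulVec_apply, Matrix.zero_apply]
    have : ∀ t, w i * a t * (w t * a j) = (w i * a j) * (a t * w t) := fun t => by ring
    rw [Finset.sum_congr rfl fun t _ => this t, ← Finset.mul_sum]
    have : ∑ t, a t * w t = a ⬝ᵥ w := rfl
    rw [this, haw, mul_zero]
  have hPQ : (1 + A) * (1 - A) = 1 := by
    have : (1 + A) * (1 - A) = 1 - A * A := by noncomm_ring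
    rw [this, hAA, sub_zero]
  have hQP : (1 - A) * (1 + A) = 1 := by
    have : (1 - A) * (1 + A) = 1 - A * A := by noncomm_ring
    rw [this, hAA, sub_zero]
  refine ⟨(1 + A) * Riᵀ, Rᵀ * (1 - A), ?_, ?_, ?_, ?_, ?_⟩
  · calc (1 + A) * Riᵀ * (Rᵀ * (1 - A)) = (1 + A) * (Riᵀ * Rᵀ) * (1 - A) := by
          noncomm_ring
    _ = 1 := by rw [← Matrix.transpose_mul, hRRi, Matrix.transpose_one, mul_one, hPQ]
  · calc Rᵀ * (1 - A) * ((1 + A) * Riᵀ) = Rᵀ * ((1 - A) * (1 + A)) * Riᵀ := by noncomm_ring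
    _ = 1 := by rw [hQP, mul_one, ← Matrix.transpose_mul, hRiR, Matrix.transpose_one]
  · -- IsL
    have h1 : IsL k (1 + A) := by
      intro i j hij
      simp only [Matrix.add_apply, hA, Matrix.vecMulVec_apply, Matrix.one_apply]
      rcases hij with h | h
      · have hvi : v i = 0 := by
          show Ri (Fin.last n) i = 0
          rw [hRiL (Fin.last n) i (Or.inr h)]
          have : ¬ Fin.last n = i := by
            intro hc; rw [← hc] at h; simp at h; omega
          simp [this]
        have : w i = 0 := by rw [hw]; simp [hb i h, hvi]
        rw [this, zero_mul, add_zero]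
      · rw [ha j h, mul_zero, add_zero]
    exact IsL.mul h1 (IsL.transpose hRiL)
  · -- column
    have h2 : Riᵀ *ᵥ e = v := by
      rw [he, Matrix.mulVec_single_one]
      funext i; simp [hv]
    rw [← Matrix.mulVec_mulVec, h2]
    have : A *ᵥ v = (a ⬝ᵥ v) • w := by
      funext i
      rw [Matrix.mulVec, dotProduct]
      simp only [hA, Matrix.vecMulVec_apply, Pi.smul_apply, smul_eq_mul]
      rw [Finset.sum_congr rfl (fun t _ => by ring : ∀ t ∈ Finset.univ,
        w i * a t * v t = w i * (a t * v t)), ← Finset.mul_sum]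
      have : ∑ t, a t * v t = a ⬝ᵥ v := rfl
      rw [this]; ring
    rw [Matrix.add_mulVec, Matrix.one_mulVec, this, hav, one_smul, hw]
    funext i; simp
  · -- row
    have h3 : a ᵥ* (1 + A) = a := by
      rw [Matrix.vecMul_add]
      have : a ᵥ* A = (a ⬝ᵥ w) • a := by
        funext j
        rw [Matrix.vecMul, dotProduct]
        simp only [hA, Matrix.vecMulVec_apply, Pi.smul_apply, smul_eq_mul]
        rw [Finset.sum_congr rfl (fun t _ => by ring : ∀ t ∈ Finset.univ,
          a t * (w t * a j) = (a t * w t) * a j), ← Finset.sum_mul]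
        have : ∑ t, a t * w t = a ⬝ᵥ w := rfl
        rw [this]
      rw [this, haw, zero_smul, add_zero, Matrix.vecMul_one]
    rw [← Matrix.vecMul_vecMul, h3]
    have h4 : a ᵥ* Riᵀ = Ri *ᵥ a := by
      funext j
      simp [Matrix.vecMul, Matrix.mulVec, dotProduct, mul_comm]
    rw [h4, hRia]



lemma mem_stdCompl_iff {k N : ℕ} {v : Fin N → F} :
    v ∈ stdCompl F k N ↔ ∀ j : Fin N, (j : ℕ) < k → v j = 0 := Iff.rfl

lemma finrank_stdCompl {k N : ℕ} (hk : k ≤ N) :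
    k + finrank F (stdCompl F k N) = N := by
  set π : (Fin N → F) →ₗ[F] (Fin k → F) := LinearMap.funLeft F F (Fin.castLE hk) with hπ
  have hker : LinearMap.ker π = stdCompl F k N := by
    ext v
    constructor
    · intro hv j hj
      have := congrFun (LinearMap.mem_ker.mp hv) ⟨(j : ℕ), hj⟩
      simp [hπ, LinearMap.funLeft, Fin.castLE, Fin.ext_iff] at this; exact this
    · intro hv
      rw [LinearMap.mem_ker]
      funext i
      exact hv (Fin.castLE hk i) (by simp)
  have hsurj : Function.Surjective π :=
    LinearMap.funLeft_surjective_of_injective F F _ (Fin.castLE_injective hk)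
  have := LinearMap.finrank_range_add_finrank_ker π
  rw [hker, LinearMap.range_eq_top.mpr hsurj, finrank_top] at this
  rw [Module.finrank_fin_fun, Module.finrank_fin_fun] at this
  omega

lemma finrank_range_stdInc {k N : ℕ} :
    finrank F (LinearMap.range (stdInc F k N)) ≤ k := by
  have := LinearMap.finrank_range_le (stdInc F k N)
  rwa [Module.finrank_fin_fun] at this

lemma single_mem_range_stdInc {k N : ℕ} {j : Fin N} (hj : (j : ℕ) < k) :
    Pi.single j (1 : F) ∈ LinearMap.range (stdInc F k N) := by
  refine ⟨Pi.single ⟨(j : ℕ), hj⟩ 1, funext fun i => ?_⟩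
  have h0 : stdInc F k N (Pi.single ⟨(j : ℕ), hj⟩ 1) i
      = if h : (i : ℕ) < k then (Pi.single (⟨(j : ℕ), hj⟩ : Fin k) (1 : F) : Fin k → F) ⟨(i : ℕ), h⟩ else 0 := rfl
  rw [h0]
  by_cases h : (i : ℕ) < k
  · rw [dif_pos h, Pi.single_apply, Pi.single_apply]
    simp [Fin.ext_iff]
  · rw [dif_neg h, Pi.single_apply]
    have hij : i ≠ j := by intro he; rw [he] at h; exact h hj
    simp [hij]

lemma range_stdInc_support {k N : ℕ} {v : Fin N → F}
    (hv : v ∈ LinearMap.range (stdInc F k N)) : ∀ j : Fin N, k ≤ (j : ℕ) → v j = 0 := by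
  obtain ⟨t, rfl⟩ := hv
  intro j hj
  show (if h : (j : ℕ) < k then t ⟨j, h⟩ else 0) = 0
  rw [dif_neg (by omega)]

lemma existsUW (m el r n : ℕ) (hr : m + min m el ≤ r) (hn : n = el + r)
    (x xi : Matrix (Fin (n+1)) (Fin (n+1)) F) (hxxi : x * xi = 1) (hxix : xi * x = 1) :
    ∃ u w : Fin (n+1) → F,
      (∀ j : Fin (n+1), (j : ℕ) < el → u j = 0) ∧
      (∀ j : Fin (n+1), (j : ℕ) < m → w j = 0) ∧
      (∀ j : Fin (n+1), (j : ℕ) < el → (x *ᵥ w) j = 0) ∧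
      (∀ j : Fin (n+1), (j : ℕ) < m → (u ᵥ* x) j = 0) ∧
      u ⬝ᵥ (x *ᵥ w) = 1 := by
  have hN : True := trivial
  set T : (Fin (n+1) → F) ≃ₗ[F] (Fin (n+1) → F) := LinearEquiv.ofLinear x.mulVecLin xi.mulVecLin
    (by rw [← Matrix.mulVecLin_mul, hxxi, Matrix.mulVecLin_one])
    (by rw [← Matrix.mulVecLin_mul, hxix, Matrix.mulVecLin_one]) with hT
  have hTapp : ∀ v, T v = x *ᵥ v := fun v => rfl
  have hTsymmapp : ∀ v, T.symm v = xi *ᵥ v := fun v => rfl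
  set Em := LinearMap.range (stdInc F m (n+1)) with hEm
  set Eel := LinearMap.range (stdInc F el (n+1)) with hEel
  set Sm := stdCompl F m (n+1) with hSm
  set Sel := stdCompl F el (n+1) with hSel
  set W := Sm ⊓ Submodule.comap (T : (Fin (n+1) → F) →ₗ[F] (Fin (n+1) → F)) Sel with hW
  set D := Eel ⊔ Submodule.map (T : (Fin (n+1) → F) →ₗ[F] (Fin (n+1) → F)) Em with hD
  have hmN : m ≤ n + 1 := by omega
  have helN : el ≤ n + 1 := by omega
  have hfSm := finrank_stdCompl (F := F) hmN
  have hfSel := finrank_stdCompl (F := F) helN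
  rw [← hSm] at hfSm
  rw [← hSel] at hfSel
  -- finrank of W
  have hWrank : n + 1 ≤ finrank F W + m + el := by
    have h1 := Submodule.finrank_sup_add_finrank_inf_eq Sm
      (Submodule.comap (T : (Fin (n+1) → F) →ₗ[F] (Fin (n+1) → F)) Sel)
    have h2 : finrank F (Submodule.comap (T : (Fin (n+1) → F) →ₗ[F] (Fin (n+1) → F)) Sel)
        = finrank F Sel := by
      rw [Submodule.comap_equiv_eq_map_symm]
      exact LinearEquiv.finrank_map_eq T.symm Sel
    have h3 : finrank F ↥(Sm ⊔ Submodule.comap (T : (Fin (n+1) → F) →ₗ[F] (Fin (n+1) → F)) Sel)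
        ≤ n + 1 := by
      have := Submodule.finrank_le (Sm ⊔ Submodule.comap
        (T : (Fin (n+1) → F) →ₗ[F] (Fin (n+1) → F)) Sel)
      rwa [Module.finrank_fin_fun] at this
    rw [h2] at h1
    rw [← hW] at h1
    omega
  -- main claim: some w ∈ W has T w ∉ D
  have hclaim : ∃ w₀, w₀ ∈ W ∧ T w₀ ∉ D := by
    by_contra hc
    push_neg at hc
    set C := Submodule.map (T : (Fin (n+1) → F) →ₗ[F] (Fin (n+1) → F)) W with hC
    have hCD : C ≤ D := by
      rintro c ⟨w, hw, rfl⟩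
      exact hc w hw
    have hCrank : finrank F C = finrank F W := LinearEquiv.finrank_map_eq T W
    -- C ≤ Sel
    have hCSel : C ≤ Sel := by
      rintro c ⟨w, hw, rfl⟩
      exact hw.2
    -- bound m : finrank C ≤ finrank Em
    have hbm : finrank F C ≤ finrank F Em := by
      have hdisj : C ⊓ Eel = ⊥ := by
        rw [Submodule.eq_bot_iff]
        rintro v ⟨hv1, hv2⟩
        funext j
        by_cases hj : (j : ℕ) < el
        · exact hCSel hv1 j hj
        · exact range_stdInc_support hv2 j (by omega)
      have hsup : C ⊔ Eel ≤ D := sup_le hCD le_sup_left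
      have e1 := Submodule.finrank_sup_add_finrank_inf_eq C Eel
      rw [hdisj, finrank_bot, add_zero] at e1
      have e2 : finrank F ↥(C ⊔ Eel) ≤ finrank F D :=
        Submodule.finrank_mono hsup
      have e3 := Submodule.finrank_sup_add_finrank_inf_eq Eel
        (Submodule.map (T : (Fin (n+1) → F) →ₗ[F] (Fin (n+1) → F)) Em)
      have e4 : finrank F (Submodule.map (T : (Fin (n+1) → F) →ₗ[F] (Fin (n+1) → F)) Em)
          = finrank F Em := LinearEquiv.finrank_map_eq T Em
      rw [← hD] at e3
      omega
    -- bound el : finrank W ≤ finrank Eel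
    have hbel : finrank F W ≤ finrank F Eel := by
      set D' := Submodule.map (T.symm : (Fin (n+1) → F) →ₗ[F] (Fin (n+1) → F)) Eel ⊔ Em with hD'
      have hWD' : W ≤ D' := by
        intro w hw
        have hTw : T w ∈ D := hc w hw
        rw [hD] at hTw
        obtain ⟨d1, hd1, d2, hd2, hsum⟩ := Submodule.mem_sup.mp hTw
        obtain ⟨d2', hd2', rfl⟩ := hd2
        have : w = T.symm d1 + d2' := by
          apply T.injective
          rw [map_add, LinearEquiv.apply_symm_apply, ← hsum]
          rfl
        rw [this]
        exact Submodule.add_mem_sup (Submodule.mem_map_of_mem hd1) hd2'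
      have hdisj : W ⊓ Em = ⊥ := by
        rw [Submodule.eq_bot_iff]
        rintro v ⟨hv1, hv2⟩
        funext j
        by_cases hj : (j : ℕ) < m
        · exact hv1.1 j hj
        · exact range_stdInc_support hv2 j (by omega)
      have e1 := Submodule.finrank_sup_add_finrank_inf_eq W Em
      rw [hdisj, finrank_bot, add_zero] at e1
      have e2 : finrank F ↥(W ⊔ Em) ≤ finrank F D' :=
        Submodule.finrank_mono (sup_le hWD' le_sup_right)
      have e3 := Submodule.finrank_sup_add_finrank_inf_eq
        (Submodule.map (T.symm : (Fin (n+1) → F) →ₗ[F] (Fin (n+1) → F)) Eel) Em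
      have e4 : finrank F (Submodule.map (T.symm : (Fin (n+1) → F) →ₗ[F] (Fin (n+1) → F)) Eel)
          = finrank F Eel := LinearEquiv.finrank_map_eq T.symm Eel
      rw [← hD'] at e3
      omega
    have hEmr : finrank F Em ≤ m := finrank_range_stdInc
    have hEelr : finrank F Eel ≤ el := finrank_range_stdInc
    omega
  obtain ⟨w₀, hw₀, hc⟩ := hclaim
  obtain ⟨f, hfc, hfD⟩ := Submodule.exists_dual_map_eq_bot_of_notMem hc inferInstance
  have hfzero : ∀ d ∈ D, f d = 0 := by
    intro d hd
    have : f d ∈ Submodule.map f D := Submodule.mem_map_of_mem hd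
    rw [hfD] at this
    simpa using this
  set u₀ : Fin (n+1) → F := fun j => f (Pi.single j 1) with hu₀
  have hdot : ∀ v : Fin (n+1) → F, u₀ ⬝ᵥ v = f v := by
    intro v
    conv_rhs => rw [← Finset.univ_sum_single v]
    rw [_root_.map_sum]
    rw [dotProduct]
    refine Finset.sum_congr rfl fun j _ => ?_
    have : (Pi.single j (v j) : Fin (n+1) → F) = v j • (Pi.single j 1 : Fin (n+1) → F) := by
      funext t
      by_cases ht : t = j <;> simp [Pi.single_apply, ht]
    rw [this, _root_.map_smul, smul_eq_mul, hu₀, mul_comm]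
  set c := T w₀ with hcdef
  have hfc0 : u₀ ⬝ᵥ c ≠ 0 := by rw [hdot]; exact hfc
  refine ⟨(f c)⁻¹ • u₀, w₀, ?_, ?_, ?_, ?_, ?_⟩
  · intro j hj
    have : u₀ j = 0 := by
      rw [hu₀]
      exact hfzero _ (Submodule.mem_sup_left (single_mem_range_stdInc hj))
    simp [this]
  · intro j hj
    exact hw₀.1 j hj
  · intro j hj
    have : x *ᵥ w₀ = c := (hTapp w₀).symm
    rw [this]
    exact hw₀.2 j hj
  · intro j hj
    have h1 : (u₀ ᵥ* x) j = u₀ ⬝ᵥ (x *ᵥ Pi.single j 1) := by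
      rw [Matrix.mulVec_single_one]
      rfl
    have h2 : x *ᵥ Pi.single j 1 = T (Pi.single j 1) := rfl
    have h3 : f (T (Pi.single j 1)) = 0 := by
      refine hfzero _ (Submodule.mem_sup_right ?_)
      exact Submodule.mem_map_of_mem (single_mem_range_stdInc hj)
    rw [Matrix.smul_vecMul, Pi.smul_apply, h1, h2, hdot, h3, smul_eq_mul, mul_zero]
  · have : x *ᵥ w₀ = c := (hTapp w₀).symm
    rw [this, smul_dotProduct, hdot, smul_eq_mul]
    exact inv_mul_cancel₀ hfc

end helpers

section main
open Module
variable {F : Type*} [Field F]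

theorem stmt_14' (m el r n : ℕ)
    (hr : m + min m el ≤ r) (hn : n = el + r) (x : GL (Fin (n + 1)) F) :
    ∃ g y g' : GL (Fin (n + 1)) F,
      IsL el (g : Matrix (Fin (n + 1)) (Fin (n + 1)) F) ∧
      IsL m (g' : Matrix (Fin (n + 1)) (Fin (n + 1)) F) ∧
      x = g * y * g' ∧
      (∀ i : Fin (n + 1), (y : Matrix (Fin (n + 1)) (Fin (n + 1)) F) i (Fin.last n)
          = if i = Fin.last n then 1 else 0) ∧
      (∀ j : Fin (n + 1), (y : Matrix (Fin (n + 1)) (Fin (n + 1)) F) (Fin.last n) j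
          = if (Fin.last n) = j then 1 else 0) := by
  have hxu : (↑x : Matrix (Fin (n+1)) (Fin (n+1)) F) *
      ((x⁻¹ : GL (Fin (n+1)) F) : Matrix (Fin (n+1)) (Fin (n+1)) F) = 1 := x.mul_inv
  have hxiu : ((x⁻¹ : GL (Fin (n+1)) F) : Matrix (Fin (n+1)) (Fin (n+1)) F) *
      (↑x : Matrix (Fin (n+1)) (Fin (n+1)) F) = 1 := x.inv_mul
  obtain ⟨u, w, hu, hw, hxw, hux, hdot⟩ := existsUW m el r n hr hn (↑x)
    ((x⁻¹ : GL (Fin (n+1)) F) : Matrix (Fin (n+1)) (Fin (n+1)) F) hxu hxiu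
  have hel_n : el ≤ n := by omega
  have hm_n : m ≤ n := by omega
  obtain ⟨G, Gi, hGGi, hGiG, hGL, hGcol, hGrow⟩ :=
    existsG hel_n u ((↑x : Matrix (Fin (n+1)) (Fin (n+1)) F) *ᵥ w) hu hxw hdot
  have hwd : w ⬝ᵥ (u ᵥ* (↑x : Matrix (Fin (n+1)) (Fin (n+1)) F)) = 1 := by
    rw [dotProduct_comm, ← Matrix.dotProduct_mulVec]
    exact hdot
  obtain ⟨G', Gi', hG'Gi', hGi'G', hG'L, hG'col, hG'row⟩ :=
    existsG hm_n w (u ᵥ* (↑x : Matrix (Fin (n+1)) (Fin (n+1)) F)) hw hux hwd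
  set e : Fin (n+1) → F := Pi.single (Fin.last n) 1 with he
  set g : GL (Fin (n + 1)) F := ⟨G, Gi, hGGi, hGiG⟩ with hg
  set g' : GL (Fin (n + 1)) F :=
    ⟨G'ᵀ, Gi'ᵀ, by rw [← Matrix.transpose_mul, hGi'G', Matrix.transpose_one],
      by rw [← Matrix.transpose_mul, hG'Gi', Matrix.transpose_one]⟩ with hg'
  have hval_g : (↑g : Matrix (Fin (n+1)) (Fin (n+1)) F) = G := rfl
  have hval_gi : (↑g⁻¹ : Matrix (Fin (n+1)) (Fin (n+1)) F) = Gi := rfl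
  have hval_g' : (↑g' : Matrix (Fin (n+1)) (Fin (n+1)) F) = G'ᵀ := rfl
  have hval_gi' : (↑g'⁻¹ : Matrix (Fin (n+1)) (Fin (n+1)) F) = Gi'ᵀ := rfl
  refine ⟨g, g⁻¹ * x * g'⁻¹, g', ?_, ?_, by group, ?_, ?_⟩
  · rw [hval_g]; exact hGL
  · rw [hval_g']; exact IsL.transpose hG'L
  · -- column condition
    have hyval : (↑(g⁻¹ * x * g'⁻¹) : Matrix (Fin (n+1)) (Fin (n+1)) F)
        = Gi * (↑x : Matrix (Fin (n+1)) (Fin (n+1)) F) * Gi'ᵀ := by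
      rw [Units.val_mul, Units.val_mul, hval_gi, hval_gi']
    have hstep1 : Gi'ᵀ *ᵥ e = w := by
      rw [Matrix.mulVec_transpose]
      have : (w ᵥ* G') ᵥ* Gi' = w := by
        rw [Matrix.vecMul_vecMul, hG'Gi', Matrix.vecMul_one]
      rw [← this, hG'row]
    have hstep2 : Gi *ᵥ ((↑x : Matrix (Fin (n+1)) (Fin (n+1)) F) *ᵥ w) = e := by
      rw [← hGcol, Matrix.mulVec_mulVec, hGiG, Matrix.one_mulVec]
    have hcol : (↑(g⁻¹ * x * g'⁻¹) : Matrix (Fin (n+1)) (Fin (n+1)) F) *ᵥ e = e := by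
      rw [hyval, ← Matrix.mulVec_mulVec, ← Matrix.mulVec_mulVec, hstep1, hstep2]
    intro i
    have := congrFun hcol i
    rw [he, Matrix.mulVec_single_one] at this
    change (↑(g⁻¹ * x * g'⁻¹) : Matrix (Fin (n+1)) (Fin (n+1)) F) i (Fin.last n) = _ at this
    rw [this, Pi.single_apply]
  · -- row condition
    have hyval : (↑(g⁻¹ * x * g'⁻¹) : Matrix (Fin (n+1)) (Fin (n+1)) F)
        = Gi * (↑x : Matrix (Fin (n+1)) (Fin (n+1)) F) * Gi'ᵀ := by
      rw [Units.val_mul, Units.val_mul, hval_gi, hval_gi']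
    have hstep1 : e ᵥ* Gi = u := by
      have : (u ᵥ* G) ᵥ* Gi = u := by
        rw [Matrix.vecMul_vecMul, hGGi, Matrix.vecMul_one]
      rw [← this, hGrow]
    have hstep2 : (u ᵥ* (↑x : Matrix (Fin (n+1)) (Fin (n+1)) F)) ᵥ* Gi'ᵀ = e := by
      rw [Matrix.vecMul_transpose, ← hG'col, Matrix.mulVec_mulVec, hGi'G',
        Matrix.one_mulVec]
    have hrow : e ᵥ* (↑(g⁻¹ * x * g'⁻¹) : Matrix (Fin (n+1)) (Fin (n+1)) F) = e := by
      rw [hyval, ← Matrix.vecMul_vecMul, ← Matrix.vecMul_vecMul, hstep1, hstep2]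
    intro j
    have := congrFun hrow j
    rw [he, Matrix.single_one_vecMul] at this
    change (↑(g⁻¹ * x * g'⁻¹) : Matrix (Fin (n+1)) (Fin (n+1)) F) (Fin.last n) j = _ at this
    rw [this, Pi.single_apply]
    exact if_congr eq_comm rfl rfl

end main

/-- Fix `m, ℓ ≥ 0` and `s = m + min(m, ℓ)`.  For `r ≥ s` and `n = ℓ + r`, the
map of double coset spaces `L_{ℓ,r}\GL_n/L_{m,n-m} → L_{ℓ,r+1}\GL_{n+1}/L_{m,n+1-m}`
induced by the standard inclusion is surjective: every `x ∈ GL_{n+1}(F_q)` can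
be written `x = g·y·g'` with `g ∈ L_{ℓ,r+1}`, `g' ∈ L_{m,n+1-m}` and `y` in
the image of `GL_n(F_q)`, i.e. with last row and last column those of the
identity matrix. -/
theorem stmt_14 (F : Type*) [Field F] [Fintype F] (m el r n : ℕ)
    (hr : m + min m el ≤ r) (hn : n = el + r) (x : GL (Fin (n + 1)) F) :
    ∃ g y g' : GL (Fin (n + 1)) F,
      IsL el (g : Matrix (Fin (n + 1)) (Fin (n + 1)) F) ∧
      IsL m (g' : Matrix (Fin (n + 1)) (Fin (n + 1)) F) ∧
      x = g * y * g' ∧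
      (∀ i : Fin (n + 1), (y : Matrix (Fin (n + 1)) (Fin (n + 1)) F) i (Fin.last n)
          = if i = Fin.last n then 1 else 0) ∧
      (∀ j : Fin (n + 1), (y : Matrix (Fin (n + 1)) (Fin (n + 1)) F) (Fin.last n) j
          = if (Fin.last n) = j then 1 else 0) := stmt_14' m el r n hr hn x
end

section
/- For x ∈ GL_{n+1}(F_q) and m, ℓ with n + 1 > m + ℓ + min(m, ℓ), there exist g_1 ∈ L_{ℓ, n+1−ℓ} and g'_1 ∈ L_{m, n+1−m} such that x_1 = g_1 x g'_1 has zero entries in all positions (i, j) with i > m + ℓ and j ≤ m, and in all positions (i, j) with i ≤ ℓ and j > m + ℓ; moreover any such x_1 has a nonzero entry in some position (i, j) with both i > m + ℓ and j > m + ℓ. -/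
open Matrix

set_option maxHeartbeats 1000000

/-- The index assignment sending `Fin N` to the three blocks. -/
def idxMap (el c d N : ℕ) (hec : el + c ≤ N) (hN : el + c + d = N) :
    Fin N → (Fin el ⊕ (Fin c ⊕ Fin d)) := fun i =>
  if h1 : (i : ℕ) < el then Sum.inl ⟨(i : ℕ), h1⟩
  else if h2 : (i : ℕ) < el + c then Sum.inr (Sum.inl ⟨(i : ℕ) - el, by omega⟩)
  else Sum.inr (Sum.inr ⟨(i : ℕ) - (el + c), by omega⟩)

lemma idxMap_bijective (el c d N : ℕ) (hec : el + c ≤ N) (hN : el + c + d = N) :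
    Function.Bijective (idxMap el c d N hec hN) := by
  rw [Fintype.bijective_iff_injective_and_card]
  constructor
  · intro a b hab
    simp only [idxMap] at hab
    split_ifs at hab <;> simp_all [Fin.ext_iff] <;> omega
  · simp only [Fintype.card_sum, Fintype.card_fin]
    omega

lemma lemL {F : Type*} [Field F] {N : ℕ} (el c : ℕ) (hlt : el + c < N)
    (A : Matrix (Fin N) (Fin N) F) :
    ∃ P : GL (Fin N) F, IsL el (P : Matrix (Fin N) (Fin N) F) ∧
      ∀ i j : Fin N, el + c ≤ (i : ℕ) → (j : ℕ) < c →
        ((P : Matrix (Fin N) (Fin N) F) * A) i j = 0 := by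
  classical
  set d := N - (el + c) with hd
  have hel : el ≤ N := by omega
  have hec : el + c ≤ N := by omega
  have hN : el + c + d = N := by omega
  set trel : (Fin N → F) →ₗ[F] (Fin el → F) := LinearMap.funLeft F F (Fin.castLE hel) with htrel
  set trc : (Fin N → F) →ₗ[F] (Fin c → F) :=
    LinearMap.funLeft F F (fun t : Fin c => (⟨(t : ℕ), by omega⟩ : Fin N)) with htrc
  set ψ : (Fin N → F) →ₗ[F] (Fin c → F) := trc.comp A.vecMulLinear with hψ
  set φ : (Fin N → F) →ₗ[F] (Fin el → F) × (Fin c → F) := trel.prod ψ with hφ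
  set Z := stdCompl F el N with hZdef
  set S := LinearMap.range (stdInc F el N) with hSdef
  set K := LinearMap.ker φ with hKdef
  have hKZ : K ≤ Z := by
    intro v hv j hj
    have h1 : φ v = 0 := hv
    have h2 : trel v = 0 := congrArg Prod.fst h1
    have := congrFun h2 ⟨(j : ℕ), hj⟩
    simpa [htrel, LinearMap.funLeft, Fin.castLE, Fin.eta] using this
  have hZker : Z = LinearMap.ker trel := by
    ext v
    constructor
    · intro hv
      simp only [LinearMap.mem_ker]
      ext t
      exact hv (Fin.castLE hel t) t.isLt
    · intro hv j hj
      have := congrFun (LinearMap.mem_ker.mp hv) ⟨(j : ℕ), hj⟩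
      simpa [htrel, LinearMap.funLeft, Fin.castLE, Fin.eta] using this
  have hsurj : Function.Surjective trel :=
    LinearMap.funLeft_surjective_of_injective F F _ (Fin.castLE_injective hel)
  have hfrZ : Module.finrank F Z = N - el := by
    have hrn := LinearMap.finrank_range_add_finrank_ker trel
    rw [LinearMap.range_eq_top.mpr hsurj, finrank_top] at hrn
    simp only [Module.finrank_pi, Fintype.card_fin] at hrn
    rw [hZker]
    omega
  have hfrK : d ≤ Module.finrank F K := by
    have hrn := LinearMap.finrank_range_add_finrank_ker φ
    rw [← hKdef] at hrn
    have hle : Module.finrank F (LinearMap.range φ) ≤ el + c := by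
      have := Submodule.finrank_le (LinearMap.range φ)
      simpa [Module.finrank_prod, Module.finrank_pi] using this
    simp only [Module.finrank_pi, Fintype.card_fin] at hrn
    omega
  haveI : Module.Free F K := Module.Free.of_divisionRing F K
  let bK : Module.Basis (Fin (Module.finrank F K)) F K := Module.finBasis F K
  let w : Fin d → (Fin N → F) := fun t => (bK (Fin.castLE hfrK t) : Fin N → F)
  have hliw : LinearIndependent F w := by
    have h1 : LinearIndependent F (fun i => (K.subtype (bK i))) :=
      bK.linearIndependent.map' K.subtype (Submodule.ker_subtype K)
    exact h1.comp (Fin.castLE hfrK) (Fin.castLE_injective hfrK)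
  set W := Submodule.span F (Set.range w) with hWdef
  have hWK : W ≤ K := by
    rw [hWdef, Submodule.span_le]
    rintro _ ⟨t, rfl⟩
    exact (bK (Fin.castLE hfrK t)).2
  have hfrW : Module.finrank F W = d := by
    rw [hWdef, finrank_span_eq_card hliw, Fintype.card_fin]
  have hWZ : W ≤ Z := hWK.trans hKZ
  set W₀ : Submodule F Z := W.comap Z.subtype with hW₀def
  have hfrW₀ : Module.finrank F W₀ = d := by
    rw [← hfrW]
    exact LinearEquiv.finrank_eq (Submodule.comapSubtypeEquivOfLe hWZ)
  obtain ⟨C₀, hC₀⟩ := Submodule.exists_isCompl W₀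
  have hfrC₀ : Module.finrank F C₀ = c := by
    have := Submodule.finrank_add_eq_of_isCompl hC₀
    rw [hfrW₀, hfrZ] at this
    omega
  haveI : Module.Free F W₀ := Module.Free.of_divisionRing F W₀
  haveI : Module.Free F C₀ := Module.Free.of_divisionRing F C₀
  let bW₀ : Module.Basis (Fin d) F W₀ := Module.finBasisOfFinrankEq F W₀ hfrW₀
  let bC₀ : Module.Basis (Fin c) F C₀ := Module.finBasisOfFinrankEq F C₀ hfrC₀
  let bZ : Module.Basis (Fin c ⊕ Fin d) F Z :=
    (bC₀.prod bW₀).map (Submodule.prodEquivOfIsCompl C₀ W₀ hC₀.symm)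
  have hSinj : Function.Injective (stdInc F el N) := by
    intro a b hab
    funext t
    have := congrFun hab (Fin.castLE hel t)
    simpa [stdInc, Fin.castLE, Fin.eta] using this
  have hSZ : IsCompl S Z := by
    constructor
    · rw [disjoint_iff]
      ext v
      simp only [Submodule.mem_inf, Submodule.mem_bot]
      constructor
      · rintro ⟨⟨a, rfl⟩, hvZ⟩
        funext j
        by_cases hj : (j : ℕ) < el
        · exact hvZ j hj
        · simp [stdInc, hj]
      · rintro rfl; simp
    · rw [codisjoint_iff, eq_top_iff]
      intro v _
      rw [Submodule.mem_sup]
      refine ⟨stdInc F el N (fun t => v (Fin.castLE hel t)), ⟨_, rfl⟩,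
        v - stdInc F el N (fun t => v (Fin.castLE hel t)), ?_, by ring⟩
      intro j hj
      simp only [Pi.sub_apply, stdInc, LinearMap.coe_mk, AddHom.coe_mk, dif_pos hj]
      have : Fin.castLE hel ⟨(j : ℕ), hj⟩ = j := by ext; rfl
      rw [this]; ring
  let basisS : Module.Basis (Fin el) F S :=
    (Pi.basisFun F (Fin el)).map (LinearEquiv.ofInjective (stdInc F el N) hSinj)
  let bV : Module.Basis (Fin el ⊕ (Fin c ⊕ Fin d)) F (Fin N → F) :=
    (basisS.prod bZ).map (Submodule.prodEquivOfIsCompl S Z hSZ)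
  have hbV_inl : ∀ i : Fin el, bV (Sum.inl i) = stdInc F el N (Pi.single i 1) := by
    intro i
    have h1 : (basisS.prod bZ) (Sum.inl i) = (basisS i, 0) :=
      Prod.ext (basisS.prod_apply_inl_fst bZ i) (basisS.prod_apply_inl_snd bZ i)
    simp only [bV, Module.Basis.map_apply, h1, Submodule.coe_prodEquivOfIsCompl']
    simp only [ZeroMemClass.coe_zero, add_zero]
    simp only [basisS, Module.Basis.map_apply, Pi.basisFun_apply]
    exact LinearEquiv.ofInjective_apply _ _
  have hbV_inr_memZ : ∀ s : Fin c ⊕ Fin d, (bV (Sum.inr s)) ∈ Z := by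
    intro s
    have h1 : (basisS.prod bZ) (Sum.inr s) = (0, bZ s) :=
      Prod.ext (basisS.prod_apply_inr_fst bZ s) (basisS.prod_apply_inr_snd bZ s)
    simp only [bV, Module.Basis.map_apply, h1, Submodule.coe_prodEquivOfIsCompl']
    simp only [ZeroMemClass.coe_zero, zero_add]
    exact (bZ s).2
  have hbV_inrr_memK : ∀ t : Fin d, (bV (Sum.inr (Sum.inr t))) ∈ K := by
    intro t
    have h1 : (basisS.prod bZ) (Sum.inr (Sum.inr t)) = (0, bZ (Sum.inr t)) :=
      Prod.ext (basisS.prod_apply_inr_fst bZ _) (basisS.prod_apply_inr_snd bZ _)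
    have h2 : (bC₀.prod bW₀) (Sum.inr t) = (0, bW₀ t) :=
      Prod.ext (bC₀.prod_apply_inr_fst bW₀ _) (bC₀.prod_apply_inr_snd bW₀ _)
    have h3 : bZ (Sum.inr t) = ((bW₀ t : Z)) := by
      simp only [bZ, Module.Basis.map_apply, h2, Submodule.coe_prodEquivOfIsCompl']
      simp
    have h4 : (bV (Sum.inr (Sum.inr t))) = ((bW₀ t : Z) : Fin N → F) := by
      simp only [bV, Module.Basis.map_apply, h1, Submodule.coe_prodEquivOfIsCompl']
      rw [h3]
      simp
    rw [h4]
    exact hWK (bW₀ t).2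
  set idx := idxMap el c d N hec hN with hidxdef
  let e : Fin N ≃ (Fin el ⊕ (Fin c ⊕ Fin d)) :=
    Equiv.ofBijective idx (idxMap_bijective el c d N hec hN)
  let bfin : Module.Basis (Fin N) F (Fin N → F) := bV.reindex e.symm
  have hbfin : ∀ i : Fin N, bfin i = bV (idx i) := by
    intro i
    simp [bfin, Module.Basis.reindex_apply, e]
  set M : Matrix (Fin N) (Fin N) F := (Pi.basisFun F (Fin N)).toMatrix bfin with hMdef
  set M' : Matrix (Fin N) (Fin N) F := bfin.toMatrix (Pi.basisFun F (Fin N)) with hM'def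
  have hMM' : M * M' = 1 := Module.Basis.toMatrix_mul_toMatrix_flip _ _
  have hM'M : M' * M = 1 := Module.Basis.toMatrix_mul_toMatrix_flip _ _
  have hMentry : ∀ i j : Fin N, M i j = bfin j i := by
    intro i j
    rw [hMdef, Module.Basis.toMatrix_apply, Pi.basisFun_repr]
  refine ⟨⟨Mᵀ, M'ᵀ, by rw [← transpose_mul, hM'M, transpose_one],
    by rw [← transpose_mul, hMM', transpose_one]⟩, ?_, ?_⟩
  all_goals
    have hQentry : ∀ i j : Fin N,
        ((⟨Mᵀ, M'ᵀ, by rw [← transpose_mul, hM'M, transpose_one],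
          by rw [← transpose_mul, hMM', transpose_one]⟩ : GL (Fin N) F) :
            Matrix (Fin N) (Fin N) F) i j = bV (idx i) j := by
      intro i j
      show Mᵀ i j = _
      rw [transpose_apply, hMentry, hbfin]
  · -- IsL el
    intro i j hij
    rw [hQentry]
    by_cases hi : (i : ℕ) < el
    · have hidxi : idx i = Sum.inl ⟨(i : ℕ), hi⟩ := dif_pos hi
      rw [hidxi, hbV_inl]
      by_cases hj : (j : ℕ) < el
      · simp only [stdInc, LinearMap.coe_mk, AddHom.coe_mk, dif_pos hj]
        rw [Pi.single_apply]
        by_cases hij' : i = j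
        · subst hij'; simp
        · rw [if_neg, if_neg hij']
          intro hc
          apply hij'
          have : (j : ℕ) = (i : ℕ) := by
            have := congrArg Fin.val hc
            simpa using this
          exact Fin.ext (this.symm)
      · simp only [stdInc, LinearMap.coe_mk, AddHom.coe_mk, dif_neg hj]
        rw [if_neg]
        intro hc; subst hc; exact hj hi
    · have hj : (j : ℕ) < el := by tauto
      have hne : i ≠ j := by
        intro hc; subst hc; exact hi hj
      rw [if_neg hne]
      obtain ⟨s, hs⟩ : ∃ s, idx i = Sum.inr s := by
        by_cases h2 : (i : ℕ) < el + c
        · exact ⟨Sum.inl ⟨(i : ℕ) - el, by omega⟩, by simp [hidxdef, idxMap, hi, h2]⟩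
        · exact ⟨Sum.inr ⟨(i : ℕ) - (el + c), by omega⟩, by simp [hidxdef, idxMap, hi, h2]⟩
      rw [hs]
      exact hbV_inr_memZ s j hj
  · -- zeroing
    intro i j hi hj
    have hidxi : idx i = Sum.inr (Sum.inr ⟨(i : ℕ) - (el + c), by omega⟩) := by
      have h1 : ¬ (i : ℕ) < el := by omega
      have h2 : ¬ (i : ℕ) < el + c := by omega
      simp [hidxdef, idxMap, h1, h2]
    set v := bV (idx i) with hv
    have hvK : v ∈ K := by rw [hv, hidxi]; exact hbV_inrr_memK _
    have hψv : ψ v = 0 := congrArg Prod.snd (LinearMap.mem_ker.mp hvK)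
    have hthis := congrFun hψv ⟨(j : ℕ), hj⟩
    simp only [hψ, LinearMap.comp_apply, Matrix.vecMulLinear_apply, htrc,
      LinearMap.funLeft_apply, Pi.zero_apply] at hthis
    have hjj : (⟨((⟨(j : ℕ), hj⟩ : Fin c) : ℕ), by omega⟩ : Fin N) = j := by ext; rfl
    rw [hjj] at hthis
    rw [Matrix.mul_apply]
    have hvm : Matrix.vecMul v A j = ∑ t, v t * A t j := rfl
    rw [hvm] at hthis
    rw [← hthis]
    apply Finset.sum_congr rfl
    intro t _
    rw [hQentry]


lemma aux_rows {F : Type*} [Field F] {N k : ℕ} (M : Matrix (Fin N) (Fin N) F)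
    (hM : IsUnit M) (a b : ℕ) (hba : b - a ≤ k) (hbN : b ≤ N)
    (r : Fin (k + 1) → Fin N) (hr : Function.Injective r)
    (h : ∀ (i : Fin (k + 1)) (j : Fin N), ((j : ℕ) < a ∨ b ≤ (j : ℕ)) → M (r i) j = 0) :
    False := by
  classical
  set V : Submodule F (Fin N → F) :=
    { carrier := {v | ∀ j : Fin N, ((j : ℕ) < a ∨ b ≤ (j : ℕ)) → v j = 0}
      add_mem' := fun hx hy j hj => by simp [hx j hj, hy j hj]
      zero_mem' := fun j _ => rfl
      smul_mem' := fun c x hx j hj => by simp [hx j hj] } with hV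
  -- finrank V ≤ b - a
  have hinj : Function.Injective
      ((LinearMap.funLeft F F (fun t : Fin (b - a) => (⟨a + (t : ℕ), by omega⟩ : Fin N))).comp
        V.subtype) := by
    rw [← LinearMap.ker_eq_bot]
    ext v
    simp only [LinearMap.mem_ker, Submodule.mem_bot]
    constructor
    · intro hv
      ext j
      by_cases hj : (j : ℕ) < a ∨ b ≤ (j : ℕ)
      · exact v.2 j hj
      · push_neg at hj
        have ht : (j : ℕ) - a < b - a := by omega
        have := congrFun hv ⟨(j : ℕ) - a, ht⟩
        simpa [LinearMap.funLeft, show a + ((j : ℕ) - a) = (j : ℕ) by omega,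
          Fin.eta] using this
    · rintro rfl; simp
  have hfr : Module.finrank F V ≤ b - a := by
    have := LinearMap.finrank_le_finrank_of_injective hinj
    simpa [Module.finrank_pi] using this
  -- the rows give a linearly independent family in V
  have hmem : ∀ i : Fin (k + 1), M (r i) ∈ V := fun i j hj => h i j hj
  have hli0 : LinearIndependent F (fun i : Fin N => M i) :=
    linearIndependent_rows_iff_isUnit.mpr hM
  have hli : LinearIndependent F (fun i : Fin (k + 1) => (⟨M (r i), hmem i⟩ : V)) := by
    have h2 : LinearIndependent F (fun i : Fin (k + 1) => M (r i)) := hli0.comp r hr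
    apply LinearIndependent.of_comp V.subtype
    exact h2
  have := hli.fintype_card_le_finrank
  simp only [Fintype.card_fin] at this
  omega

/-- For `x ∈ GL_{n+1}(F_q)` and `m, ℓ` with `n + 1 > m + ℓ + min(m, ℓ)`:
there are `g₁ ∈ L_{ℓ, n+1-ℓ}` and `g₁' ∈ L_{m, n+1-m}` such that
`x₁ = g₁ x g₁'` vanishes in all positions `(i, j)` with `i > m + ℓ` and
`j ≤ m`, and in all positions with `i ≤ ℓ` and `j > m + ℓ` (positions
`0`-indexed below); moreover any such `x₁` has a nonzero entry in some
position `(i, j)` with both `i > m + ℓ` and `j > m + ℓ`. -/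
theorem stmt_15 (F : Type*) [Field F] [Fintype F] (m el n : ℕ)
    (hn : m + el + min m el < n + 1) (x : GL (Fin (n + 1)) F) :
    (∃ g₁ g₁' : GL (Fin (n + 1)) F,
      IsL el (g₁ : Matrix (Fin (n + 1)) (Fin (n + 1)) F) ∧
      IsL m (g₁' : Matrix (Fin (n + 1)) (Fin (n + 1)) F) ∧
      (∀ i j : Fin (n + 1),
        (m + el ≤ (i : ℕ) ∧ (j : ℕ) < m) ∨ ((i : ℕ) < el ∧ m + el ≤ (j : ℕ)) →
        ((g₁ : Matrix (Fin (n + 1)) (Fin (n + 1)) F) *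
          (x : Matrix (Fin (n + 1)) (Fin (n + 1)) F) *
          (g₁' : Matrix (Fin (n + 1)) (Fin (n + 1)) F)) i j = 0)) ∧
    (∀ y : GL (Fin (n + 1)) F,
      (∀ i j : Fin (n + 1),
        (m + el ≤ (i : ℕ) ∧ (j : ℕ) < m) ∨ ((i : ℕ) < el ∧ m + el ≤ (j : ℕ)) →
        (y : Matrix (Fin (n + 1)) (Fin (n + 1)) F) i j = 0) →
      ∃ i j : Fin (n + 1), m + el ≤ (i : ℕ) ∧ m + el ≤ (j : ℕ) ∧
        (y : Matrix (Fin (n + 1)) (Fin (n + 1)) F) i j ≠ 0) := by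
  classical
  have hmel : m + el < n + 1 := by omega
  constructor
  · -- Part 1
    obtain ⟨g₁, hg₁L, hg₁z⟩ := lemL el m (by omega : el + m < n + 1)
      (x : Matrix (Fin (n + 1)) (Fin (n + 1)) F)
    set B : Matrix (Fin (n + 1)) (Fin (n + 1)) F :=
      (g₁ : Matrix (Fin (n + 1)) (Fin (n + 1)) F) *
        (x : Matrix (Fin (n + 1)) (Fin (n + 1)) F) with hBdef
    obtain ⟨P, hPL, hPz⟩ := lemL m el (by omega : m + el < n + 1) Bᵀ
    refine ⟨g₁, ⟨((P : Matrix (Fin (n + 1)) (Fin (n + 1)) F))ᵀ,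
        ((P⁻¹ : GL (Fin (n + 1)) F) : Matrix (Fin (n + 1)) (Fin (n + 1)) F)ᵀ, ?_, ?_⟩, hg₁L, ?_, ?_⟩
    · rw [← Matrix.transpose_mul]
      rw [show ((P⁻¹ : GL (Fin (n + 1)) F) : Matrix (Fin (n + 1)) (Fin (n + 1)) F) *
          (P : Matrix (Fin (n + 1)) (Fin (n + 1)) F) = 1 from P.inv_mul,
        Matrix.transpose_one]
    · rw [← Matrix.transpose_mul]
      rw [show (P : Matrix (Fin (n + 1)) (Fin (n + 1)) F) *
          ((P⁻¹ : GL (Fin (n + 1)) F) : Matrix (Fin (n + 1)) (Fin (n + 1)) F) = 1 from P.mul_inv,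
        Matrix.transpose_one]
    · -- IsL m of the transpose
      intro i j hij
      show ((P : Matrix (Fin (n + 1)) (Fin (n + 1)) F))ᵀ i j = _
      rw [Matrix.transpose_apply, hPL j i (by tauto)]
      by_cases h : i = j
      · subst h; simp
      · rw [if_neg (fun hc => h hc.symm), if_neg h]
    · -- zeroing
      intro i j hij
      show (B * ((P : Matrix (Fin (n + 1)) (Fin (n + 1)) F))ᵀ) i j = 0
      have hmul : (B * ((P : Matrix (Fin (n + 1)) (Fin (n + 1)) F))ᵀ) i j
          = ∑ k, B i k * (P : Matrix (Fin (n + 1)) (Fin (n + 1)) F) j k := by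
        rw [Matrix.mul_apply]
        exact Finset.sum_congr rfl (fun k _ => by rw [Matrix.transpose_apply])
      rw [hmul]
      rcases hij with ⟨hi, hj⟩ | ⟨hi, hj⟩
      · -- i ≥ m + el, j < m : collapse the sum using IsL m P
        rw [Finset.sum_eq_single j]
        · rw [hPL j j (Or.inl hj), if_pos rfl, mul_one]
          exact hg₁z i j (by omega) hj
        · intro k _ hk
          rw [hPL j k (Or.inl hj), if_neg (fun hc => hk hc.symm), mul_zero]
        · intro h; exact absurd (Finset.mem_univ j) h
      · -- i < el, j ≥ m + el
        have := hPz j i (by omega) hi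
        rw [Matrix.mul_apply] at this
        rw [← this]
        apply Finset.sum_congr rfl
        intro k _
        rw [Matrix.transpose_apply, mul_comm]
  · -- Part 2
    intro y hy
    by_contra hcon
    push_neg at hcon
    by_cases hcase : el ≤ m
    · have hminel : min m el = el := min_eq_right hcase
      refine absurd rfl (fun _ : (0:ℕ) = 0 => ?_)
      refine aux_rows (y : Matrix (Fin (n + 1)) (Fin (n + 1)) F) y.isUnit
        m (m + el) (by omega) (by omega)
        (fun i : Fin (el + 1) => (⟨m + el + (i : ℕ), by omega⟩ : Fin (n + 1))) ?_ ?_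
      · intro a b hab
        have := congrArg Fin.val hab
        simp only at this
        exact Fin.ext (by omega)
      · intro i j hj
        rcases hj with hj | hj
        · exact hy _ j (Or.inl ⟨by simp, hj⟩)
        · exact hcon _ j (by simp) hj
    · have hm : m < el := by omega
      refine absurd rfl (fun _ : (0:ℕ) = 0 => ?_)
      refine aux_rows ((y : Matrix (Fin (n + 1)) (Fin (n + 1)) F))ᵀ
        ((Matrix.isUnit_transpose _).mpr y.isUnit)
        el (m + el) (by omega) (by omega)
        (fun i : Fin (m + 1) => (⟨m + el + (i : ℕ), by omega⟩ : Fin (n + 1))) ?_ ?_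
      · intro a b hab
        have := congrArg Fin.val hab
        simp only at this
        exact Fin.ext (by omega)
      · intro i j hj
        rw [Matrix.transpose_apply]
        rcases hj with hj | hj
        · exact hy j _ (Or.inr ⟨hj, by simp⟩)
        · exact hcon j _ hj (by simp)
end
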